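/- In the counterexample system, any fixed (non-adaptive) schedule of two measurement times from {0,1,2} incurs strictly positive expected mean square error: for each choice of {t₁,t₂} ⊆ {0,1,2} with t₁ < t₂, the sum over t=0..2 of the conditional error variances E[(x(t) − E[x(t) | y(t_k), t_k ≤ t])²] is strictly positive, and it is minimized by the schedule t₁=1, t₂=2, whose total error equals 1 (the error at time 0 from not observing x(0) ∈ {−1, +1}). -/

import Mathlib

open MeasureTheory

/-- Total filtering error of a fixed measurement schedule `s ⊆ {0,1,2}`:
the sum over `t = 0,1,2` of the mean square error of the conditional
expectation of `x t` given the measurements acquired at times in `s` up to `t`. -/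
noncomputable def totalErr {Ω : Type*} [mΩ : MeasurableSpace Ω] (μ : Measure Ω)
    (x : ℕ → Ω → ℝ) (s : Finset ℕ) : ℝ :=
  ∑ t ∈ Finset.range 3,
    ∫ ω, (x t ω -
      (μ[x t | ⨆ k ∈ s.filter (· ≤ t), MeasurableSpace.comap (x k) inferInstance]) ω) ^ 2 ∂μ

open MeasurableSpace ProbabilityTheory

section Aux

set_option linter.unusedSectionVars false
variable {Ω : Type*} [mΩ : MeasurableSpace Ω] (μ : Measure Ω) [IsProbabilityMeasure μ]

/-- zero error when `f` is `m`-measurable. -/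
theorem aux_errZero {m : MeasurableSpace Ω} (hm : m ≤ mΩ) {f : Ω → ℝ}
    (hsm : StronglyMeasurable[m] f) (hfi : Integrable f μ) :
    ∫ ω, (f ω - (μ[f|m]) ω) ^ 2 ∂μ = 0 := by
  haveI : SigmaFinite (μ.trim hm) := by infer_instance
  rw [condExp_of_stronglyMeasurable hm hsm hfi]
  simp

/-- conditional expectation is a.e. zero when all the set integrals vanish. -/
theorem aux_condexpZero {m : MeasurableSpace Ω} (hm : m ≤ mΩ) {f : Ω → ℝ}
    (hfi : Integrable f μ)
    (h : ∀ A, MeasurableSet[m] A → ∫ ω in A, f ω ∂μ = 0) :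
    μ[f|m] =ᵐ[μ] 0 := by
  haveI : SigmaFinite (μ.trim hm) := by infer_instance
  refine (ae_eq_condExp_of_forall_setIntegral_eq hm hfi
    (fun s _ _ => (integrableOn_zero : IntegrableOn (fun _ => (0:ℝ)) s μ)) ?_ ?_).symm
  · intro s hs _
    rw [h s hs]
    simp
  exact StronglyMeasurable.aestronglyMeasurable (@stronglyMeasurable_zero Ω ℝ m _ _)

theorem aux_errOfCondexpZero {ν : Measure Ω} {m : MeasurableSpace Ω} {f : Ω → ℝ}
    (h : ν[f|m] =ᵐ[ν] 0) :
    ∫ ω, (f ω - (ν[f|m]) ω) ^ 2 ∂ν = ∫ ω, (f ω) ^ 2 ∂ν := by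
  refine integral_congr_ae (h.mono fun ω hω => ?_)
  simp [hω]

theorem aux_unif_aemeas {w : Ω → ℝ}
    (hlaw : μ.map w = (12 : ENNReal)⁻¹ • volume.restrict (Set.Icc (-6 : ℝ) 6)) :
    AEMeasurable w μ := by
  by_contra h
  rw [Measure.map_of_not_aemeasurable h] at hlaw
  have := congrArg (fun ν : Measure ℝ => ν Set.univ) hlaw
  simp [Measure.restrict_apply, Real.volume_Icc] at this
  exact absurd this (by norm_num)

theorem aux_unif_mem {w : Ω → ℝ}
    (hlaw : μ.map w = (12 : ENNReal)⁻¹ • volume.restrict (Set.Icc (-6 : ℝ) 6)) :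
    ∀ᵐ ω ∂μ, w ω ∈ Set.Icc (-6 : ℝ) 6 := by
  have ha := aux_unif_aemeas μ hlaw
  have : μ (w ⁻¹' (Set.Icc (-6:ℝ) 6)ᶜ) = 0 := by
    rw [← Measure.map_apply_of_aemeasurable ha measurableSet_Icc.compl, hlaw]
    simp [Measure.restrict_apply]
  filter_upwards [measure_eq_zero_iff_ae_notMem.mp this] with ω hω
  simpa using hω

theorem aux_unif_zero {w : Ω → ℝ}
    (hlaw : μ.map w = (12 : ENNReal)⁻¹ • volume.restrict (Set.Icc (-6 : ℝ) 6)) :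
    μ {ω | w ω = 0} = 0 := by
  have ha := aux_unif_aemeas μ hlaw
  have : μ (w ⁻¹' {(0:ℝ)}) = 0 := by
    rw [← Measure.map_apply_of_aemeasurable ha (measurableSet_singleton 0), hlaw]
    simp [Measure.restrict_apply]
  exact this

theorem aux_unif_integral {w : Ω → ℝ}
    (hlaw : μ.map w = (12 : ENNReal)⁻¹ • volume.restrict (Set.Icc (-6 : ℝ) 6)) :
    ∫ ω, w ω ∂μ = 0 := by
  have ha := aux_unif_aemeas μ hlaw
  have : ∫ ω, w ω ∂μ = ∫ y, y ∂(μ.map w) := (integral_map ha aestronglyMeasurable_id).symm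
  rw [this, hlaw, integral_smul_measure, integral_Icc_eq_integral_Ioc,
    ← intervalIntegral.integral_of_le (by norm_num : (-6:ℝ) ≤ 6)]
  rw [integral_id]
  norm_num

theorem aux_unif_sq_integral {w : Ω → ℝ}
    (hlaw : μ.map w = (12 : ENNReal)⁻¹ • volume.restrict (Set.Icc (-6 : ℝ) 6)) :
    ∫ ω, (w ω) ^ 2 ∂μ = 12 := by
  have ha := aux_unif_aemeas μ hlaw
  have : ∫ ω, (w ω) ^ 2 ∂μ = ∫ y, y ^ 2 ∂(μ.map w) :=
    (integral_map ha (measurable_id.pow_const 2).aestronglyMeasurable).symm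
  rw [this, hlaw, integral_smul_measure, integral_Icc_eq_integral_Ioc,
    ← intervalIntegral.integral_of_le (by norm_num : (-6:ℝ) ≤ 6)]
  rw [integral_pow]
  norm_num

theorem aux_unif_integrable {w : Ω → ℝ}
    (hlaw : μ.map w = (12 : ENNReal)⁻¹ • volume.restrict (Set.Icc (-6 : ℝ) 6)) :
    Integrable w μ := by
  refine Integrable.mono' (integrable_const (6:ℝ)) (aux_unif_aemeas μ hlaw).aestronglyMeasurable ?_
  filter_upwards [aux_unif_mem μ hlaw] with ω hω
  rw [Real.norm_eq_abs, abs_le]; exact ⟨hω.1, hω.2⟩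

theorem aux_unif_sq_integrable {w : Ω → ℝ}
    (hlaw : μ.map w = (12 : ENNReal)⁻¹ • volume.restrict (Set.Icc (-6 : ℝ) 6)) :
    Integrable (fun ω => (w ω) ^ 2) μ := by
  refine Integrable.mono' (integrable_const (36:ℝ))
    ((aux_unif_aemeas μ hlaw).pow_const 2).aestronglyMeasurable ?_
  filter_upwards [aux_unif_mem μ hlaw] with ω hω
  have : |w ω| ≤ 6 := abs_le.mpr ⟨hω.1, hω.2⟩
  rw [Real.norm_eq_abs, abs_pow]
  calc |w ω| ^ 2 ≤ 6 ^ 2 := by gcongr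
    _ = 36 := by norm_num

theorem aux_iIndepFun_ae_congr {ι : Type*} {ν : Measure Ω}
    {f g : ι → Ω → ℝ}
    (hfg : ∀ i, f i =ᵐ[ν] g i) (hf : ProbabilityTheory.iIndepFun f ν) :
    ProbabilityTheory.iIndepFun g ν := by
  rw [ProbabilityTheory.iIndepFun_iff] at hf ⊢
  intro s f' H
  choose B hB hBeq using fun i hi => H i hi
  classical
  set E : ι → Set Ω := fun i => if h : i ∈ s then f i ⁻¹' B i h else ∅ with hE
  have key : ∀ i (hi : i ∈ s), E i =ᵐ[ν] f' i := by
    intro i hi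
    rw [hE]; simp only [dif_pos hi]
    rw [← hBeq i hi]
    filter_upwards [hfg i] with ω hω
    show (ω ∈ f i ⁻¹' B i hi) = (ω ∈ g i ⁻¹' B i hi)
    simp [Set.mem_preimage, hω]
  have hmeas : ∀ i ∈ s, MeasurableSet[MeasurableSpace.comap (f i) inferInstance] (E i) := by
    intro i hi
    rw [hE]; simp only [dif_pos hi]
    exact ⟨B i hi, hB i hi, rfl⟩
  have h1 : ν (⋂ i ∈ s, f' i) = ν (⋂ i ∈ s, E i) := by
    refine measure_congr ?_
    rw [Filter.eventuallyEq_set]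
    have : ∀ᵐ ω ∂ν, ∀ i ∈ (s : Set ι), (ω ∈ E i ↔ ω ∈ f' i) := by
      rw [MeasureTheory.ae_ball_iff s.countable_toSet]
      intro i hi
      filter_upwards [key i hi] with ω hω
      exact iff_of_eq hω
    filter_upwards [this] with ω hω
    simp only [Set.mem_iInter]
    exact ⟨fun h i hi => (hω i hi).mpr (h i hi), fun h i hi => (hω i hi).mp (h i hi)⟩
  rw [h1, hf s hmeas]
  exact Finset.prod_congr rfl fun i hi => measure_congr (key i hi)

/-- Any set measurable w.r.t. `m' ⊔ comap g` is a.e. equal to a set measurable w.r.t.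
`m' ⊔ comap g'` when `g =ᵐ g'`. -/
theorem aux_exists_ae_eq_sup_comap {ν : Measure Ω} {β : Type*} [mβ : MeasurableSpace β]
    {g g' : Ω → β} (hgg' : g =ᵐ[ν] g') (m' : MeasurableSpace Ω) {A : Set Ω}
    (hA : MeasurableSet[m' ⊔ MeasurableSpace.comap g mβ] A) :
    ∃ A', MeasurableSet[m' ⊔ MeasurableSpace.comap g' mβ] A' ∧ A =ᵐ[ν] A' := by
  set m₂ := m' ⊔ MeasurableSpace.comap g' mβ with hm₂
  let M : MeasurableSpace Ω :=
    { MeasurableSet' := fun A => ∃ A', MeasurableSet[m₂] A' ∧ A =ᵐ[ν] A'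
      measurableSet_empty := ⟨∅, MeasurableSet.empty, by rfl⟩
      measurableSet_compl := by
        rintro A ⟨A', hA', hae⟩
        exact ⟨A'ᶜ, hA'.compl, hae.compl⟩
      measurableSet_iUnion := by
        intro u hu
        choose A' hA' hae using hu
        exact ⟨⋃ n, A' n, MeasurableSet.iUnion hA', EventuallyEq.countable_iUnion hae⟩ }
  have hle : m' ⊔ MeasurableSpace.comap g mβ ≤ M := by
    refine sup_le ?_ ?_
    · intro A hA
      exact ⟨A, (le_sup_left : m' ≤ m₂) _ hA, by rfl⟩
    · rintro A ⟨B, hB, rfl⟩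
      refine ⟨g' ⁻¹' B, (le_sup_right : MeasurableSpace.comap g' mβ ≤ m₂) _ ⟨B, hB, rfl⟩, ?_⟩
      filter_upwards [hgg'] with ω hω
      show (ω ∈ g ⁻¹' B) = (ω ∈ g' ⁻¹' B)
      simp [Set.mem_preimage, hω]
  exact hle A hA

end Aux

theorem stmt_14 {Ω : Type*} [mΩ : MeasurableSpace Ω] (μ : Measure Ω)
    [IsProbabilityMeasure μ]
    (x : ℕ → Ω → ℝ) (w0 w1 : Ω → ℝ)
    (hxmeas : ∀ t, Measurable (x t))
    (hx0 : μ {ω | x 0 ω = 1} = 1 / 2 ∧ μ {ω | x 0 ω = -1} = 1 / 2)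
    (hx1 : ∀ ω, x 1 ω = if x 0 ω = 1 then w0 ω else 0)
    (hx2 : ∀ ω, x 2 ω = if x 1 ω = 0 then w1 ω else 0)
    (hw0law : μ.map w0 = (12 : ENNReal)⁻¹ • volume.restrict (Set.Icc (-6 : ℝ) 6))
    (hw1law : μ.map w1 = (12 : ENNReal)⁻¹ • volume.restrict (Set.Icc (-6 : ℝ) 6))
    (hindep : ProbabilityTheory.iIndepFun
      ![x 0, w0, w1] μ) :
    totalErr μ x {0, 1} = 6 ∧ totalErr μ x {0, 2} = 6 ∧ totalErr μ x {1, 2} = 1 ∧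
    ∀ t₁ t₂ : ℕ, t₁ < t₂ → t₂ ≤ 2 →
      0 < totalErr μ x {t₁, t₂} ∧ totalErr μ x {1, 2} ≤ totalErr μ x {t₁, t₂} := by
  classical
  obtain ⟨hA2, hB2⟩ := hx0
  set A : Set Ω := {ω | x 0 ω = 1} with hA
  set B : Set Ω := {ω | x 0 ω = -1} with hB
  have hAmeas : MeasurableSet A := hxmeas 0 (measurableSet_singleton 1)
  have hBmeas : MeasurableSet B := hxmeas 0 (measurableSet_singleton (-1))
  have hABc : μ (A ∪ B)ᶜ = 0 := by
    have hd : Disjoint A B := by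
      rw [Set.disjoint_left]
      intro ω h1 h2
      rw [hA, Set.mem_setOf_eq] at h1
      rw [hB, Set.mem_setOf_eq] at h2
      rw [h1] at h2; norm_num at h2
    have hu : μ (A ∪ B) = 1 := by
      rw [measure_union hd hBmeas, hA2, hB2, ENNReal.add_halves]
    rw [measure_compl (hAmeas.union hBmeas) (by finiteness), hu, measure_univ, tsub_self]
  have hx0ae : ∀ᵐ ω ∂μ, x 0 ω = 1 ∨ x 0 ω = -1 := by
    filter_upwards [measure_eq_zero_iff_ae_notMem.mp hABc] with ω hω
    rw [or_iff_not_imp_left]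
    simpa [A, B, Set.mem_union, Set.mem_setOf_eq] using hω
  -- measurable modifications of the noises
  have hw0a : AEMeasurable w0 μ := aux_unif_aemeas μ hw0law
  have hw1a : AEMeasurable w1 μ := aux_unif_aemeas μ hw1law
  set w0' : Ω → ℝ := hw0a.mk w0 with hw0'
  set w1' : Ω → ℝ := hw1a.mk w1 with hw1'
  have hw0'meas : Measurable w0' := hw0a.measurable_mk
  have hw1'meas : Measurable w1' := hw1a.measurable_mk
  have hw0'ae : w0 =ᵐ[μ] w0' := hw0a.ae_eq_mk
  have hw1'ae : w1 =ᵐ[μ] w1' := hw1a.ae_eq_mk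
  set x1' : Ω → ℝ := fun ω => if x 0 ω = 1 then w0' ω else 0 with hx1'
  have hx1'meas : Measurable x1' := Measurable.ite hAmeas hw0'meas measurable_const
  have hx1ae : x 1 =ᵐ[μ] x1' := by
    filter_upwards [hw0'ae] with ω hω
    rw [hx1 ω, hx1', hω]
  -- independence
  have hindep' : ProbabilityTheory.iIndepFun ![x 0, w0', w1'] μ := by
    refine aux_iIndepFun_ae_congr ?_ hindep
    intro i
    fin_cases i
    · simp
    · simpa using hw0'ae
    · simpa using hw1'ae
  have hmeas' : ∀ i, Measurable (![x 0, w0', w1'] i) := by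
    intro i; fin_cases i
    · simpa using hxmeas 0
    · simpa using hw0'meas
    · simpa using hw1'meas
  have hx0w0 : ProbabilityTheory.IndepFun (x 0) w0 μ := by
    have := hindep.indepFun (i := 0) (j := 1) (by decide)
    simpa using this
  have hPw1 : ProbabilityTheory.IndepFun (fun ω => (x 0 ω, w0' ω)) w1 μ := by
    have := hindep'.indepFun_prodMk hmeas' 0 1 2 (by decide) (by decide)
    simp only [Matrix.cons_val_zero, Matrix.cons_val_one, Matrix.head_cons,
      Matrix.cons_val_two, Matrix.tail_cons] at this
    exact this.congr (by rfl) hw1'ae.symm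

  -- basic indicator functions on ℝ
  set φ0 : ℝ → ℝ := ({(0:ℝ)} : Set ℝ).indicator (fun _ => 1) with hφ0def
  set φ1 : ℝ → ℝ := ({(1:ℝ)} : Set ℝ).indicator (fun _ => 1) with hφ1def
  have hφ0meas : Measurable φ0 := measurable_const.indicator (measurableSet_singleton 0)
  have hφ1meas : Measurable φ1 := measurable_const.indicator (measurableSet_singleton 1)
  have hφ0app : ∀ a, φ0 a = if a = 0 then 1 else 0 := by
    intro a; rw [hφ0def, Set.indicator_apply]; simp [Set.mem_singleton_iff]
  have hφ1app : ∀ a, φ1 a = if a = 1 then 1 else 0 := by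
    intro a; rw [hφ1def, Set.indicator_apply]; simp [Set.mem_singleton_iff]
  -- integrability
  have aux_int_bdd : ∀ {f : Ω → ℝ} {c : ℝ}, AEStronglyMeasurable f μ →
      (∀ᵐ ω ∂μ, |f ω| ≤ c) → Integrable f μ := by
    intro f c hm hb
    refine Integrable.mono' (integrable_const c) hm ?_
    filter_upwards [hb] with ω hω
    rwa [Real.norm_eq_abs]
  have int_w0 := aux_unif_integrable μ hw0law
  have int_w1 := aux_unif_integrable μ hw1law
  have int_w0sq := aux_unif_sq_integrable μ hw0law
  have int_w1sq := aux_unif_sq_integrable μ hw1law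
  have int_x0 : Integrable (x 0) μ := by
    refine aux_int_bdd (c := 1) (hxmeas 0).aestronglyMeasurable ?_
    filter_upwards [hx0ae] with ω hω
    rcases hω with h | h <;> rw [h] <;> norm_num
  have int_x1 : Integrable (x 1) μ := by
    refine aux_int_bdd (c := 6) (hxmeas 1).aestronglyMeasurable ?_
    filter_upwards [aux_unif_mem μ hw0law] with ω hω
    rw [hx1 ω]
    by_cases h : x 0 ω = 1
    · rw [if_pos h]; exact abs_le.mpr ⟨hω.1, hω.2⟩
    · rw [if_neg h]; norm_num
  have int_x2 : Integrable (x 2) μ := by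
    refine aux_int_bdd (c := 6) (hxmeas 2).aestronglyMeasurable ?_
    filter_upwards [aux_unif_mem μ hw1law] with ω hω
    rw [hx2 ω]
    by_cases h : x 1 ω = 0
    · rw [if_pos h]; exact abs_le.mpr ⟨hω.1, hω.2⟩
    · rw [if_neg h]; norm_num
  -- σ-algebras
  have hM_mΩ : (MeasurableSpace.comap (x 0) inferInstance ⊔
      MeasurableSpace.comap w0' inferInstance) ≤ mΩ :=
    sup_le (hxmeas 0).comap_le hw0'meas.comap_le
  have hMP : (MeasurableSpace.comap (x 0) inferInstance ⊔
      MeasurableSpace.comap w0' inferInstance) ≤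
      MeasurableSpace.comap (fun ω => (x 0 ω, w0' ω)) inferInstance := by
    have hP : Measurable[MeasurableSpace.comap (fun ω => (x 0 ω, w0' ω)) inferInstance]
        (fun ω => (x 0 ω, w0' ω)) := Measurable.of_comap_le le_rfl
    exact sup_le (Measurable.comap_le (measurable_fst.comp hP))
      (Measurable.comap_le (measurable_snd.comp hP))
  have hIndepM : ∀ {G : Ω → ℝ}, Measurable[MeasurableSpace.comap (x 0) inferInstance ⊔
      MeasurableSpace.comap w0' inferInstance] G →
      ProbabilityTheory.IndepFun G w1 μ := by
    intro G hG
    rw [ProbabilityTheory.IndepFun_iff_Indep] at hPw1 ⊢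
    exact ProbabilityTheory.indep_of_indep_of_le_left hPw1 (hG.comap_le.trans hMP)
  have hAM : MeasurableSet[MeasurableSpace.comap (x 0) inferInstance ⊔
      MeasurableSpace.comap w0' inferInstance] A := by
    have h : MeasurableSpace.comap (x 0) inferInstance ≤ MeasurableSpace.comap (x 0) inferInstance ⊔
        MeasurableSpace.comap w0' inferInstance := le_sup_left
    exact h _ ⟨{1}, measurableSet_singleton 1, rfl⟩
  have hx1'M : Measurable[MeasurableSpace.comap (x 0) inferInstance ⊔
      MeasurableSpace.comap w0' inferInstance] x1' := by
    refine Measurable.ite hAM ?_ measurable_const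
    exact Measurable.mono (Measurable.of_comap_le le_rfl) le_sup_right le_rfl
  -- the probability that x 1 = 0 is 1/2
  have hmeasSupR : ∀ (m : MeasurableSpace Ω) (t : ℕ),
      Measurable[m ⊔ MeasurableSpace.comap (x t) inferInstance] (x t) := fun m t =>
    Measurable.mono (Measurable.of_comap_le le_rfl) le_sup_right le_rfl
  have hx1zero : μ {ω | x 1 ω = 0} = 1/2 := by
    have h1 : ({ω | x 1 ω = 0} : Set Ω) =ᵐ[μ] B := by
      rw [MeasureTheory.ae_eq_set]
      constructor
      · refine measure_mono_null ?_
          (measure_union_null hABc (aux_unif_zero μ hw0law))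
        rintro ω ⟨h0, hnB⟩
        rw [Set.mem_setOf_eq] at h0
        by_cases hx : x 0 ω = 1
        · right
          rw [Set.mem_setOf_eq]
          rw [hx1 ω, if_pos hx] at h0
          exact h0
        · left
          rw [Set.mem_compl_iff]
          rintro (h | h)
          · exact hx h
          · exact hnB h
      · have he : B \ {ω | x 1 ω = 0} = ∅ := by
          ext ω
          simp only [Set.mem_diff, Set.mem_setOf_eq, Set.mem_empty_iff_false, iff_false, not_and,
            not_not, hB]
          intro hb
          rw [hx1 ω, if_neg (by rw [hb]; norm_num)]
        rw [he, measure_empty]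
    rw [measure_congr h1, hB2]
  have hx1'zero : μ {ω | x1' ω = 0} = 1/2 := by
    have h2 : ({ω | x1' ω = 0} : Set Ω) =ᵐ[μ] {ω | x 1 ω = 0} := by
      filter_upwards [hx1ae] with ω hω
      show (x1' ω = 0) = (x 1 ω = 0)
      rw [hω]
    rw [measure_congr h2, hx1zero]
  have htoReal : ((1:ENNReal)/2).toReal = (1:ℝ)/2 := by
    rw [ENNReal.toReal_div]; norm_num
  -- Term (1): zero error whenever x t is measurable
  have err1 : ∫ ω, (x 0 ω - (μ[x 0 | MeasurableSpace.comap (x 0) inferInstance]) ω) ^ 2 ∂μ = 0 :=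
    aux_errZero μ (hxmeas 0).comap_le (Measurable.of_comap_le le_rfl).stronglyMeasurable int_x0
  have err2 : ∫ ω, (x 1 ω - (μ[x 1 | MeasurableSpace.comap (x 0) inferInstance ⊔
      MeasurableSpace.comap (x 1) inferInstance]) ω) ^ 2 ∂μ = 0 := by
    refine aux_errZero μ (sup_le (hxmeas 0).comap_le (hxmeas 1).comap_le) ?_ int_x1
    exact Measurable.stronglyMeasurable (Measurable.mono (Measurable.of_comap_le le_rfl) le_sup_right le_rfl)
  have err5 : ∫ ω, (x 2 ω - (μ[x 2 | MeasurableSpace.comap (x 0) inferInstance ⊔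
      MeasurableSpace.comap (x 2) inferInstance]) ω) ^ 2 ∂μ = 0 := by
    refine aux_errZero μ (sup_le (hxmeas 0).comap_le (hxmeas 2).comap_le) ?_ int_x2
    exact Measurable.stronglyMeasurable (Measurable.mono (Measurable.of_comap_le le_rfl) le_sup_right le_rfl)
  have err7 : ∫ ω, (x 1 ω - (μ[x 1 | MeasurableSpace.comap (x 1) inferInstance]) ω) ^ 2 ∂μ = 0 :=
    aux_errZero μ (hxmeas 1).comap_le (Measurable.of_comap_le le_rfl).stronglyMeasurable int_x1
  have err8 : ∫ ω, (x 2 ω - (μ[x 2 | MeasurableSpace.comap (x 1) inferInstance ⊔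
      MeasurableSpace.comap (x 2) inferInstance]) ω) ^ 2 ∂μ = 0 := by
    refine aux_errZero μ (sup_le (hxmeas 1).comap_le (hxmeas 2).comap_le) ?_ int_x2
    exact Measurable.stronglyMeasurable (Measurable.mono (Measurable.of_comap_le le_rfl) le_sup_right le_rfl)
  -- Term (6): error 1 at time 0 with no measurement
  have hintx0 : ∫ ω, x 0 ω ∂μ = 0 := by
    have hx0rep : x 0 =ᵐ[μ]
        (fun ω => A.indicator (fun _ => (1:ℝ)) ω + B.indicator (fun _ => (-1:ℝ)) ω) := by
      filter_upwards [hx0ae] with ω hω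
      rcases hω with h | h
      · have hωA : ω ∈ A := h
        have hωB : ω ∉ B := by rw [hB, Set.mem_setOf_eq, h]; norm_num
        simp [Pi.add_apply, Set.indicator_apply, hωA, hωB, h]
      · have hωA : ω ∉ A := by rw [hA, Set.mem_setOf_eq, h]; norm_num
        have hωB : ω ∈ B := h
        simp [Pi.add_apply, Set.indicator_apply, hωA, hωB, h]
    rw [integral_congr_ae hx0rep,
      integral_add ((integrable_const (1:ℝ)).indicator hAmeas)
        ((integrable_const (-1:ℝ)).indicator hBmeas),
      integral_indicator_const _ hAmeas, integral_indicator_const _ hBmeas, measureReal_def, measureReal_def, hA2, hB2, htoReal]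
    norm_num
  have err6 : ∫ ω, (x 0 ω - (μ[x 0 | (⊥ : MeasurableSpace Ω)]) ω) ^ 2 ∂μ = 1 := by
    rw [condExp_bot]
    simp only [hintx0, sub_zero]
    have hsq : (fun ω => (x 0 ω) ^ 2) =ᵐ[μ] (fun _ => (1:ℝ)) := by
      filter_upwards [hx0ae] with ω hω
      rcases hω with h | h <;> rw [h] <;> norm_num
    rw [integral_congr_ae hsq]
    simp
  -- Term (4): error 6 at time 1 knowing only x 0
  have hx1fact : ∀ ω, x 1 ω = φ1 (x 0 ω) * w0 ω := by
    intro ω; rw [hx1 ω, hφ1app]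
    by_cases h : x 0 ω = 1 <;> simp [h]
  have hcz4 : μ[x 1 | MeasurableSpace.comap (x 0) inferInstance] =ᵐ[μ] 0 := by
    refine aux_condexpZero μ (hxmeas 0).comap_le int_x1 ?_
    intro S hS
    have hSΩ : MeasurableSet S := (hxmeas 0).comap_le _ hS
    have key : ∫ ω in S, x 1 ω ∂μ
        = ∫ ω, (S.indicator (fun _ => (1:ℝ)) ω * φ1 (x 0 ω)) * w0 ω ∂μ := by
      rw [← integral_indicator hSΩ]
      congr 1
      funext ω
      rw [Set.indicator_apply]
      by_cases h : ω ∈ S <;> simp [h, hx1fact ω, Set.indicator_apply]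
    have hind : ProbabilityTheory.IndepFun
        (fun ω => S.indicator (fun _ => (1:ℝ)) ω * φ1 (x 0 ω)) w0 μ := by
      rw [ProbabilityTheory.IndepFun_iff_Indep] at hx0w0 ⊢
      refine ProbabilityTheory.indep_of_indep_of_le_left hx0w0 ?_
      exact Measurable.comap_le
        ((measurable_const.indicator hS).mul (hφ1meas.comp (Measurable.of_comap_le le_rfl)))
    have intF : Integrable (fun ω => S.indicator (fun _ => (1:ℝ)) ω * φ1 (x 0 ω)) μ := by
      refine aux_int_bdd (c := 1)
        (((measurable_const.indicator hSΩ).mul (hφ1meas.comp (hxmeas 0))).aestronglyMeasurable) ?_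
      refine Filter.Eventually.of_forall fun ω => ?_
      rw [Set.indicator_apply, hφ1app]
      by_cases h1 : ω ∈ S <;> by_cases h2 : x 0 ω = 1 <;> simp [h1, h2]
    have hmul := hind.integral_mul_eq_mul_integral intF.aestronglyMeasurable int_w0.aestronglyMeasurable
    rw [key]
    have hfin : integral μ ((fun ω => S.indicator (fun _ => (1:ℝ)) ω * φ1 (x 0 ω)) * w0) = 0 := by
      rw [hmul, aux_unif_integral μ hw0law, mul_zero]
    exact hfin
  have hφ1int : ∫ ω, φ1 (x 0 ω) ∂μ = 1/2 := by
    have e : (fun ω => φ1 (x 0 ω)) = A.indicator (fun _ => (1:ℝ)) := by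
      funext ω
      rw [hφ1app, Set.indicator_apply]
      rfl
    rw [e, integral_indicator_const _ hAmeas, measureReal_def, hA2, htoReal]
    norm_num
  have intφ1 : Integrable (fun ω => φ1 (x 0 ω)) μ := by
    refine aux_int_bdd (c := 1) ((hφ1meas.comp (hxmeas 0)).aestronglyMeasurable) ?_
    refine Filter.Eventually.of_forall fun ω => ?_
    rw [hφ1app]
    by_cases h : x 0 ω = 1 <;> simp [h]
  have err4 : ∫ ω, (x 1 ω - (μ[x 1 | MeasurableSpace.comap (x 0) inferInstance]) ω) ^ 2 ∂μ
      = 6 := by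
    rw [aux_errOfCondexpZero hcz4]
    have hrep : (fun ω => (x 1 ω) ^ 2) = fun ω => φ1 (x 0 ω) * (w0 ω) ^ 2 := by
      funext ω
      rw [hx1 ω, hφ1app]
      by_cases h : x 0 ω = 1 <;> simp [h]
    rw [hrep]
    have hind : ProbabilityTheory.IndepFun (fun ω => φ1 (x 0 ω)) (fun ω => (w0 ω) ^ 2) μ := by
      have := hx0w0.comp hφ1meas (measurable_id.pow_const 2)
      simpa [Function.comp_def] using this
    have hmul := hind.integral_mul_eq_mul_integral intφ1.aestronglyMeasurable int_w0sq.aestronglyMeasurable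
    have hfin : integral μ ((fun ω => φ1 (x 0 ω)) * fun ω => (w0 ω) ^ 2) = 6 := by
      rw [hmul, aux_unif_sq_integral μ hw0law, hφ1int]
      norm_num
    exact hfin
  -- Term (3): error 6 at time 2 knowing x 0 and x 1
  have hm01 : (MeasurableSpace.comap (x 0) inferInstance ⊔
      MeasurableSpace.comap (x 1) inferInstance) ≤ mΩ :=
    sup_le (hxmeas 0).comap_le (hxmeas 1).comap_le
  have intφ0 : Integrable (fun ω => φ0 (x1' ω)) μ := by
    refine aux_int_bdd (c := 1) ((hφ0meas.comp hx1'meas).aestronglyMeasurable) ?_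
    refine Filter.Eventually.of_forall fun ω => ?_
    rw [hφ0app]
    by_cases h : x1' ω = 0 <;> simp [h]
  have hφ0int : ∫ ω, φ0 (x1' ω) ∂μ = 1/2 := by
    have e : (fun ω => φ0 (x1' ω)) = Set.indicator {ω | x1' ω = 0} (fun _ => (1:ℝ)) := by
      funext ω
      rw [hφ0app, Set.indicator_apply]
      rfl
    have hzm : MeasurableSet {ω | x1' ω = 0} := hx1'meas (measurableSet_singleton 0)
    rw [e, integral_indicator_const _ hzm, measureReal_def, hx1'zero, htoReal]
    norm_num
  have hcz3 : μ[x 2 | MeasurableSpace.comap (x 0) inferInstance ⊔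
      MeasurableSpace.comap (x 1) inferInstance] =ᵐ[μ] 0 := by
    refine aux_condexpZero μ hm01 int_x2 ?_
    intro S hS
    obtain ⟨S', hS'm, hSae⟩ :=
      aux_exists_ae_eq_sup_comap hx1ae (MeasurableSpace.comap (x 0) inferInstance) hS
    have hS'M : MeasurableSet[MeasurableSpace.comap (x 0) inferInstance ⊔
        MeasurableSpace.comap w0' inferInstance] S' :=
      (sup_le le_sup_left (Measurable.comap_le hx1'M)) _ hS'm
    have hS'Ω : MeasurableSet S' := hM_mΩ _ hS'M
    have hx2rep : x 2 =ᵐ[μ] fun ω => φ0 (x1' ω) * w1 ω := by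
      filter_upwards [hx1ae] with ω hω
      rw [hx2 ω, hω, hφ0app]
      by_cases h : x1' ω = 0 <;> simp [h]
    have key : ∫ ω in S, x 2 ω ∂μ
        = ∫ ω, (S'.indicator (fun _ => (1:ℝ)) ω * φ0 (x1' ω)) * w1 ω ∂μ := by
      rw [setIntegral_congr_set hSae, integral_congr_ae (ae_restrict_of_ae hx2rep),
        ← integral_indicator hS'Ω]
      congr 1
      funext ω
      rw [Set.indicator_apply]
      by_cases h : ω ∈ S' <;> simp [h, Set.indicator_apply]
    have hFM : Measurable[MeasurableSpace.comap (x 0) inferInstance ⊔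
        MeasurableSpace.comap w0' inferInstance]
        (fun ω => S'.indicator (fun _ => (1:ℝ)) ω * φ0 (x1' ω)) :=
      (measurable_const.indicator hS'M).mul (hφ0meas.comp hx1'M)
    have hind := hIndepM hFM
    have intF : Integrable (fun ω => S'.indicator (fun _ => (1:ℝ)) ω * φ0 (x1' ω)) μ := by
      refine aux_int_bdd (c := 1) ((Measurable.mono hFM hM_mΩ le_rfl).aestronglyMeasurable) ?_
      refine Filter.Eventually.of_forall fun ω => ?_
      rw [Set.indicator_apply, hφ0app]
      by_cases h1 : ω ∈ S' <;> by_cases h2 : x1' ω = 0 <;> simp [h1, h2]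
    have hmul := hind.integral_mul_eq_mul_integral intF.aestronglyMeasurable int_w1.aestronglyMeasurable
    rw [key]
    have hfin : integral μ ((fun ω => S'.indicator (fun _ => (1:ℝ)) ω * φ0 (x1' ω)) * w1) = 0 := by
      rw [hmul, aux_unif_integral μ hw1law, mul_zero]
    exact hfin
  have err3 : ∫ ω, (x 2 ω - (μ[x 2 | MeasurableSpace.comap (x 0) inferInstance ⊔
      MeasurableSpace.comap (x 1) inferInstance]) ω) ^ 2 ∂μ = 6 := by
    rw [aux_errOfCondexpZero hcz3]
    have hrep : (fun ω => (x 2 ω) ^ 2) =ᵐ[μ] fun ω => φ0 (x1' ω) * (w1 ω) ^ 2 := by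
      filter_upwards [hx1ae] with ω hω
      rw [hx2 ω, hω, hφ0app]
      by_cases h : x1' ω = 0 <;> simp [h]
    rw [integral_congr_ae hrep]
    have hind0 : ProbabilityTheory.IndepFun (fun ω => φ0 (x1' ω)) w1 μ :=
      hIndepM (hφ0meas.comp hx1'M)
    have hind : ProbabilityTheory.IndepFun (fun ω => φ0 (x1' ω)) (fun ω => (w1 ω) ^ 2) μ := by
      have := hind0.comp measurable_id (measurable_id.pow_const 2)
      simpa [Function.comp_def] using this
    have hmul := hind.integral_mul_eq_mul_integral intφ0.aestronglyMeasurable int_w1sq.aestronglyMeasurable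
    have hfin : integral μ ((fun ω => φ0 (x1' ω)) * fun ω => (w1 ω) ^ 2) = 6 := by
      rw [hmul, aux_unif_sq_integral μ hw1law, hφ0int]
      norm_num
    exact hfin
  -- assembling the total errors
  have hf01_0 : Finset.filter (· ≤ 0) ({0,1} : Finset ℕ) = {0} := by decide
  have hf01_1 : Finset.filter (· ≤ 1) ({0,1} : Finset ℕ) = {0,1} := by decide
  have hf01_2 : Finset.filter (· ≤ 2) ({0,1} : Finset ℕ) = {0,1} := by decide
  have hf02_0 : Finset.filter (· ≤ 0) ({0,2} : Finset ℕ) = {0} := by decide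
  have hf02_1 : Finset.filter (· ≤ 1) ({0,2} : Finset ℕ) = {0} := by decide
  have hf02_2 : Finset.filter (· ≤ 2) ({0,2} : Finset ℕ) = {0,2} := by decide
  have hf12_0 : Finset.filter (· ≤ 0) ({1,2} : Finset ℕ) = ∅ := by decide
  have hf12_1 : Finset.filter (· ≤ 1) ({1,2} : Finset ℕ) = {1} := by decide
  have hf12_2 : Finset.filter (· ≤ 2) ({1,2} : Finset ℕ) = {1,2} := by decide
  have hsups : ∀ a b : ℕ, (⨆ k ∈ ({a,b} : Finset ℕ), MeasurableSpace.comap (x k) inferInstance)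
      = MeasurableSpace.comap (x a) inferInstance ⊔ MeasurableSpace.comap (x b) inferInstance := by
    intro a b
    rw [show ({a,b}:Finset ℕ) = insert a {b} from rfl, Finset.iSup_insert, Finset.iSup_singleton]
  have hsup1 : ∀ a : ℕ, (⨆ k ∈ ({a} : Finset ℕ), MeasurableSpace.comap (x k) inferInstance)
      = MeasurableSpace.comap (x a) inferInstance := by
    intro a; simp
  have hsupe : (⨆ k ∈ (∅ : Finset ℕ), MeasurableSpace.comap (x k) inferInstance)
      = (⊥ : MeasurableSpace Ω) := by simp
  have h01 : totalErr μ x {0, 1} = 6 := by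
    simp only [totalErr]
    rw [Finset.sum_range_succ, Finset.sum_range_succ, Finset.sum_range_one]
    rw [hf01_0, hf01_1, hf01_2, hsup1, hsups, err1, err2, err3]
    norm_num
  have h02 : totalErr μ x {0, 2} = 6 := by
    simp only [totalErr]
    rw [Finset.sum_range_succ, Finset.sum_range_succ, Finset.sum_range_one]
    rw [hf02_0, hf02_1, hf02_2, hsup1, hsups, err1, err4, err5]
    norm_num
  have h12 : totalErr μ x {1, 2} = 1 := by
    simp only [totalErr]
    rw [Finset.sum_range_succ, Finset.sum_range_succ, Finset.sum_range_one]
    rw [hf12_0, hf12_1, hf12_2, hsupe, hsup1, hsups, err6, err7, err8]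
    norm_num
  refine ⟨h01, h02, h12, ?_⟩
  intro t₁ t₂ hlt h2
  interval_cases t₂ <;> interval_cases t₁
  · rw [h01, h12]; norm_num
  · rw [h02, h12]; norm_num
  · rw [h12]; norm_num
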